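/- Let a, b, q be integers with q ≥ 1 and gcd(a, q) = 1, and suppose: b is an arbitrary integer when q is odd; b is even when q ≡ 0 (mod 4); b is odd when q ≡ 2 (mod 4). Then |∑_{r=0}^{q−1} e^{2πi(a r² + b r)/q}| = √q if q is odd, and |∑_{r=0}^{q−1} e^{2πi(a r² + b r)/q}| = √(2q) if q is even. -/

import Mathlib

open Complex Finset

noncomputable def ee (n : ℕ) (t : ℤ) : ℂ :=
  Complex.exp (2 * Real.pi * Complex.I * t / n)

lemma ee_add (n : ℕ) (hn : 0 < n) (s t : ℤ) : ee n (s + t) = ee n s * ee n t := by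
  rw [ee, ee, ee, ← Complex.exp_add]
  have h : (n : ℂ) ≠ 0 := Nat.cast_ne_zero.mpr hn.ne'
  congr 1
  push_cast
  field_simp

lemma ee_dvd (n : ℕ) (hn : 0 < n) {t : ℤ} (h : (n : ℤ) ∣ t) : ee n t = 1 := by
  obtain ⟨k, rfl⟩ := h
  have hne : (n : ℂ) ≠ 0 := Nat.cast_ne_zero.mpr hn.ne'
  rw [ee]
  have harg : 2 * (Real.pi:ℂ) * Complex.I * ((n:ℤ) * k : ℤ) / n
      = k * (2 * Real.pi * Complex.I) := by
    push_cast
    field_simp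
  rw [harg, Complex.exp_int_mul_two_pi_mul_I]

lemma ee_congr (n : ℕ) (hn : 0 < n) {s t : ℤ} (h : (n : ℤ) ∣ s - t) : ee n s = ee n t := by
  have : s = t + (s - t) := by ring
  rw [this, ee_add n hn, ee_dvd n hn h, mul_one]

lemma conj_ee (n : ℕ) (t : ℤ) : (starRingEnd ℂ) (ee n t) = ee n (-t) := by
  rw [ee, ee, ← Complex.exp_conj]
  congr 1
  simp [map_div₀, Complex.conj_I, map_ofNat]

lemma ee_ne_one (n : ℕ) (hn : 0 < n) {t : ℤ} (h0 : 0 < t) (h1 : t < n) : ee n t ≠ 1 := by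
  intro h
  rw [ee, Complex.exp_eq_one_iff] at h
  obtain ⟨k, hk⟩ := h
  have hne : (n : ℂ) ≠ 0 := Nat.cast_ne_zero.mpr hn.ne'
  have h2 : (2 * (Real.pi:ℂ) * Complex.I) ≠ 0 := by
    simp [Real.pi_ne_zero, Complex.I_ne_zero]
  have hc : (2 * (Real.pi:ℂ) * Complex.I) * t = (2 * (Real.pi:ℂ) * Complex.I) * (k * n) := by
    field_simp at hk
    linear_combination (2 * (Real.pi:ℂ) * Complex.I) * hk
  have ht : (t : ℂ) = (k * n : ℤ) := by
    have := mul_left_cancel₀ h2 hc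
    push_cast
    exact this
  have htz : t = k * n := by exact_mod_cast ht
  rcases le_or_gt k 0 with hk0 | hk0
  · have : k * (n:ℤ) ≤ 0 := mul_nonpos_of_nonpos_of_nonneg hk0 (by positivity)
    omega
  · have : (n:ℤ) ≤ k * n := le_mul_of_one_le_left (by positivity) hk0
    omega



noncomputable def EE (n : ℕ) [NeZero n] (x : ZMod n) : ℂ := ee n (x.val : ℤ)

lemma EE_intCast (n : ℕ) [NeZero n] (t : ℤ) : EE n ((t : ZMod n)) = ee n t := by
  have hn : 0 < n := Nat.pos_of_ne_zero (NeZero.ne n)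
  rw [EE]
  apply ee_congr n hn
  rw [ZMod.val_intCast]
  rw [Int.emod_def]
  exact ⟨-(t / n), by ring⟩

lemma cast_val (n : ℕ) [NeZero n] (x : ZMod n) : (((x.val : ℤ)) : ZMod n) = x := by
  push_cast
  simp [ZMod.natCast_val, ZMod.cast_id]

lemma EE_add (n : ℕ) [NeZero n] (x y : ZMod n) : EE n (x + y) = EE n x * EE n y := by
  have hn : 0 < n := Nat.pos_of_ne_zero (NeZero.ne n)
  have hx := cast_val n x
  have hy := cast_val n y
  have : x + y = (((x.val : ℤ) + (y.val : ℤ) : ℤ) : ZMod n) := by push_cast [hx, hy]; ring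
  rw [this, EE_intCast, ee_add n hn, EE, EE]

lemma conj_EE (n : ℕ) [NeZero n] (x : ZMod n) : (starRingEnd ℂ) (EE n x) = EE n (-x) := by
  have : -x = ((-(x.val : ℤ) : ℤ) : ZMod n) := by push_cast [cast_val n x]; ring
  rw [this, EE_intCast, ← conj_ee, EE]

lemma EE_zero (n : ℕ) [NeZero n] : EE n 0 = 1 := by
  have hn : 0 < n := Nat.pos_of_ne_zero (NeZero.ne n)
  rw [EE]
  simp [ee_dvd n hn]

lemma sum_EE (n : ℕ) [NeZero n] (c : ZMod n) :
    ∑ y : ZMod n, EE n (c * y) = if c = 0 then (n : ℂ) else 0 := by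
  have hn : 0 < n := Nat.pos_of_ne_zero (NeZero.ne n)
  split_ifs with hc
  · subst hc
    simp [EE_zero]
  · have key : EE n c * ∑ y : ZMod n, EE n (c * y) = ∑ y : ZMod n, EE n (c * y) := by
      rw [Finset.mul_sum]
      rw [← Equiv.sum_comp (Equiv.addLeft (1 : ZMod n)) (fun y => EE n (c * y))]
      apply Finset.sum_congr rfl
      intro y _
      rw [← EE_add]
      congr 1
      simp [Equiv.addLeft]
      ring
    have hne : EE n c ≠ 1 := by
      have hv : c.val ≠ 0 := fun h => hc ((ZMod.val_eq_zero c).mp h)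
      have h0 : (0:ℤ) < (c.val : ℤ) := by exact_mod_cast Nat.pos_of_ne_zero hv
      have h1 : ((c.val : ℤ)) < n := by exact_mod_cast ZMod.val_lt c
      exact ee_ne_one n hn h0 h1
    by_contra hsum
    exact hne (by
      have h := sub_eq_zero.mpr key
      have : (EE n c - 1) * ∑ y : ZMod n, EE n (c * y) = 0 := by ring_nf; linear_combination h
      rcases mul_eq_zero.mp this with h' | h'
      · exact sub_eq_zero.mp h'
      · exact absurd h' hsum)

lemma sum_range_eq (n : ℕ) [NeZero n] (f : ℤ → ℂ) :
    ∑ r ∈ Finset.range n, f r = ∑ x : ZMod n, f (x.val : ℤ) := by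
  apply Finset.sum_nbij' (i := fun r => ((r : ℕ) : ZMod n)) (j := fun x => x.val)
  · intro r hr; exact Finset.mem_univ _
  · intro x _; exact Finset.mem_range.mpr (ZMod.val_lt x)
  · intro r hr; exact ZMod.val_natCast_of_lt (Finset.mem_range.mp hr)
  · intro x _; simp [ZMod.natCast_val, ZMod.cast_id]
  · intro r hr
    rw [ZMod.val_natCast_of_lt (Finset.mem_range.mp hr)]

/-- **Gauss quadratic sums.** If `a, b, q` are integers with `q ≥ 1`, `gcd(a,q) = 1`, and
`b` is even when `q ≡ 0 (mod 4)`, odd when `q ≡ 2 (mod 4)` (arbitrary when `q` is odd),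
then the modulus of the complete Gauss sum `∑_{r=0}^{q-1} e^{2πi(ar² + br)/q}` equals
`√q` when `q` is odd and `√(2q)` when `q` is even. -/
theorem gauss_quadratic_sum_modulus (a b q : ℤ) (hq : 1 ≤ q) (hcop : Int.gcd a q = 1)
    (hb0 : q % 4 = 0 → Even b) (hb2 : q % 4 = 2 → Odd b) :
    ‖∑ r ∈ Finset.range q.toNat,
        Complex.exp (2 * (Real.pi : ℂ) * Complex.I *
          (((a : ℂ) * (r : ℂ) ^ 2 + (b : ℂ) * (r : ℂ)) / (q : ℂ)))‖ =
      if Odd q then Real.sqrt q else Real.sqrt (2 * q) := by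
  set n := q.toNat with hn_def
  have hqn : (n : ℤ) = q := Int.toNat_of_nonneg (by omega)
  have hn : 0 < n := by omega
  haveI : NeZero n := ⟨hn.ne'⟩
  have hqc : (q : ℂ) = (n : ℂ) := by exact_mod_cast congrArg (Int.cast : ℤ → ℂ) hqn.symm
  set A : ZMod n := ((a : ℤ) : ZMod n) with hA
  set B : ZMod n := ((b : ℤ) : ZMod n) with hB
  set φ : ZMod n → ZMod n := fun x => A * x ^ 2 + B * x with hφ
  -- Step 1: rewrite the sum
  have hterm : ∀ r : ℕ, Complex.exp (2 * (Real.pi : ℂ) * Complex.I *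
          (((a : ℂ) * (r : ℂ) ^ 2 + (b : ℂ) * (r : ℂ)) / (q : ℂ)))
        = ee n (a * (r : ℤ) ^ 2 + b * (r : ℤ)) := by
    intro r
    rw [ee]
    congr 1
    rw [hqc]
    have hne : (n : ℂ) ≠ 0 := Nat.cast_ne_zero.mpr hn.ne'
    push_cast
    field_simp
  set S := ∑ x : ZMod n, EE n (φ x) with hS
  have hsum : (∑ r ∈ Finset.range q.toNat,
        Complex.exp (2 * (Real.pi : ℂ) * Complex.I *
          (((a : ℂ) * (r : ℂ) ^ 2 + (b : ℂ) * (r : ℂ)) / (q : ℂ)))) = S := by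
    rw [Finset.sum_congr rfl (fun r _ => hterm r), ← hn_def,
      sum_range_eq n (fun t => ee n (a * t ^ 2 + b * t))]
    apply Finset.sum_congr rfl
    intro x _
    rw [← EE_intCast]
    congr 1
    push_cast [cast_val n x]
    rw [hφ]
  rw [hsum]
  -- Step 2: |S|^2
  have key : (Complex.normSq S : ℂ)
      = ∑ h : ZMod n, (if 2 * A * h = 0 then EE n (A * h ^ 2 + B * h) * n else 0) := by
    rw [← Complex.mul_conj]
    have hconj : (starRingEnd ℂ) S = ∑ y : ZMod n, EE n (-(φ y)) := by
      rw [hS, map_sum]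
      exact Finset.sum_congr rfl fun y _ => conj_EE n (φ y)
    rw [hconj, hS, Finset.sum_mul_sum]
    have h1 : ∀ x y : ZMod n, EE n (φ x) * EE n (-(φ y)) = EE n (φ x - φ y) := by
      intro x y; rw [← EE_add]; congr 1; ring
    calc ∑ x : ZMod n, ∑ y : ZMod n, EE n (φ x) * EE n (-(φ y))
        = ∑ y : ZMod n, ∑ x : ZMod n, EE n (φ x - φ y) := by
          rw [Finset.sum_comm]
          exact Finset.sum_congr rfl fun y _ => Finset.sum_congr rfl fun x _ => h1 x y
      _ = ∑ y : ZMod n, ∑ h : ZMod n, EE n ((A * h ^ 2 + B * h) + (2 * A * h) * y) := by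
          apply Finset.sum_congr rfl
          intro y _
          rw [← Equiv.sum_comp (Equiv.addLeft y) (fun x => EE n (φ x - φ y))]
          apply Finset.sum_congr rfl
          intro h _
          congr 1
          show φ (y + h) - φ y = _
          rw [hφ]
          ring
      _ = ∑ h : ZMod n, EE n (A * h ^ 2 + B * h) * ∑ y : ZMod n, EE n ((2 * A * h) * y) := by
          rw [Finset.sum_comm]
          apply Finset.sum_congr rfl
          intro h _
          rw [Finset.mul_sum]
          exact Finset.sum_congr rfl fun y _ => (EE_add n _ _)
      _ = _ := by
          apply Finset.sum_congr rfl
          intro h _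
          rw [sum_EE, mul_ite, mul_zero]
  -- Step 3: A is a unit, so 2*A*h = 0 ↔ 2*h = 0
  have hunit : ∃ U : ZMod n, A * U = 1 := by
    obtain ⟨u, v, huv⟩ := Int.isCoprime_iff_gcd_eq_one.mpr hcop
    refine ⟨((u : ℤ) : ZMod n), ?_⟩
    have h0 : ((q : ℤ) : ZMod n) = 0 := by
      rw [← hqn]; push_cast; exact ZMod.natCast_self n
    have := congrArg (Int.cast : ℤ → ZMod n) huv
    push_cast at this
    rw [h0] at this
    rw [hA]
    linear_combination this
  obtain ⟨U, hU⟩ := hunit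
  have hiff : ∀ h : ZMod n, (2 * A * h = 0 ↔ 2 * h = 0) := by
    intro h
    constructor
    · intro h2
      have : U * (2 * A * h) = 0 := by rw [h2, mul_zero]
      calc 2 * h = U * (2 * A * h) := by linear_combination (2 * h) * hU.symm - this + this
        _ = 0 := this
    · intro h2
      calc 2 * A * h = A * (2 * h) := by ring
        _ = 0 := by rw [h2, mul_zero]
  have key2 : (Complex.normSq S : ℂ)
      = ∑ h ∈ Finset.univ.filter (fun h : ZMod n => 2 * h = 0),
          EE n (A * h ^ 2 + B * h) * n := by
    rw [key, Finset.sum_filter]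
    apply Finset.sum_congr rfl
    intro h _
    exact if_congr (hiff h) rfl rfl
  -- Step 4: membership criterion
  have hmem : ∀ h : ZMod n, 2 * h = 0 ↔ n ∣ 2 * h.val := by
    intro h
    have : 2 * h = ((2 * h.val : ℕ) : ZMod n) := by
      push_cast
      rw [ZMod.natCast_val, ZMod.cast_id]
    rw [this, ZMod.natCast_eq_zero_iff]
  by_cases ho : Odd q
  · -- odd case
    rw [if_pos ho]
    have hno : Odd n := by
      rcases ho with ⟨k, hk⟩
      refine ⟨k.toNat, ?_⟩
      omega
    have hfil : Finset.univ.filter (fun h : ZMod n => 2 * h = 0) = {0} := by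
      ext h
      simp only [Finset.mem_filter, Finset.mem_univ, true_and, Finset.mem_singleton]
      rw [hmem h]
      constructor
      · intro hd
        have hcop2 : Nat.Coprime n 2 := hno.coprime_two_right
        have hnd : n ∣ h.val := Nat.Coprime.dvd_of_dvd_mul_left hcop2 hd
        have hlt := ZMod.val_lt h
        exact (ZMod.val_eq_zero h).mp (Nat.eq_zero_of_dvd_of_lt hnd hlt)
      · rintro rfl
        simp
    rw [hfil] at key2
    simp only [Finset.sum_singleton] at key2
    have : (Complex.normSq S : ℂ) = (n : ℂ) := by
      rw [key2]
      norm_num [EE_zero]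
    have hns : Complex.normSq S = (n : ℝ) := by exact_mod_cast this
    rw [Complex.norm_def, hns]
    congr 1
    exact_mod_cast congrArg (Int.cast : ℤ → ℝ) hqn
  · -- even case
    rw [if_neg ho]
    have hqe : Even q := Int.not_odd_iff_even.mp ho
    have hne : Even n := by
      rcases hqe with ⟨k, hk⟩
      refine ⟨k.toNat, ?_⟩
      omega
    obtain ⟨m, hm⟩ := hne
    have hm2 : n = 2 * m := by omega
    have hm1 : 1 ≤ m := by omega
    have hmlt : m < n := by omega
    have hvm : ((m : ZMod n)).val = m := ZMod.val_natCast_of_lt hmlt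
    have h0m : (0 : ZMod n) ≠ (m : ZMod n) := by
      intro h
      have := congrArg ZMod.val h
      rw [hvm, ZMod.val_zero] at this
      omega
    have hfil : Finset.univ.filter (fun h : ZMod n => 2 * h = 0) = {0, (m : ZMod n)} := by
      ext h
      simp only [Finset.mem_filter, Finset.mem_univ, true_and, Finset.mem_insert,
        Finset.mem_singleton]
      rw [hmem h]
      constructor
      · intro hd
        have hlt := ZMod.val_lt h
        have : h.val = 0 ∨ h.val = m := by
          rcases hd with ⟨c, hc⟩
          have hc2 : c < 2 := by
            by_contra hcc
            push_neg at hcc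
            have : n * 2 ≤ n * c := Nat.mul_le_mul_left n hcc
            omega
          interval_cases c <;> omega
        rcases this with h' | h'
        · exact Or.inl ((ZMod.val_eq_zero h).mp h')
        · right
          have := cast_val n h
          rw [h'] at this
          rw [← this]
          push_cast
          ring
      · rintro (rfl | rfl)
        · simp
        · rw [hvm]
          exact ⟨1, by omega⟩
    rw [hfil] at key2
    rw [Finset.sum_pair h0m] at key2
    -- second term equals n
    have hpar : Even (a * (m : ℤ) + b) := by
      have hq2 : q % 2 = 0 := Int.even_iff.mp hqe
      have hq4 : q % 4 = 0 ∨ q % 4 = 2 := by omega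
      rcases hq4 with h4 | h4
      · have hbe := hb0 h4
        have hme : Even ((m : ℤ)) := by
          have : (4 : ℤ) ∣ q := Int.dvd_of_emod_eq_zero h4
          rcases this with ⟨c, hc⟩
          refine ⟨c, by omega⟩
        exact (hme.mul_left a).add hbe
      · have hbo := hb2 h4
        have hmo : Odd ((m : ℤ)) := by
          rw [Int.odd_iff]
          omega
        have hao : Odd a := by
          rw [← Int.not_even_iff_odd]
          intro hae
          have h2a : (2 : ℤ) ∣ a := hae.two_dvd
          have h2q : (2 : ℤ) ∣ q := hqe.two_dvd
          have := Int.dvd_gcd h2a h2q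
          rw [hcop] at this
          norm_num at this
        exact (hao.mul hmo).add_odd hbo
    have hdvd : (n : ℤ) ∣ a * (m : ℤ) ^ 2 + b * (m : ℤ) := by
      rcases hpar with ⟨k, hk⟩
      refine ⟨k, ?_⟩
      have : (n : ℤ) = 2 * (m : ℤ) := by exact_mod_cast hm2
      rw [this]
      linear_combination (m : ℤ) * hk
    have hterm2 : EE n (A * (m : ZMod n) ^ 2 + B * (m : ZMod n)) = 1 := by
      have : A * (m : ZMod n) ^ 2 + B * (m : ZMod n)
          = ((a * (m : ℤ) ^ 2 + b * (m : ℤ) : ℤ) : ZMod n) := by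
        push_cast
        ring
      rw [this, EE_intCast, ee_dvd n hn hdvd]
    have : (Complex.normSq S : ℂ) = ((2 * n : ℕ) : ℂ) := by
      rw [key2, hterm2]
      norm_num [EE_zero]
      ring
    have hns : Complex.normSq S = ((2 * n : ℕ) : ℝ) := by exact_mod_cast this
    rw [Complex.norm_def, hns]
    congr 1
    push_cast
    rw [← hqn]
    push_cast
    ring
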